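/- Let x, w, r : ℤ → ℝ be sequences, let L_isi, N_ch, L, N₀ be positive integers with L ≥ L_isi and N₀ ≥ L, let g : ℤ → ℤ → ℝ satisfy g(m + N_ch, l) = g(m, l) for all m, l, with N_ch dividing N₀, and extend g by g(m,l) := 0 for l < 0 or l ≥ L_isi. Suppose r(m) = Σ_{l=0}^{L_isi−1} g(m, l)·x(m − l) + w(m) for all m ∈ ℤ. Define for each n ∈ ℤ the N₀-dimensional vectors x̃[n], r̃[n], w̃[n] by (x̃[n])_i := x(nN₀ + i), (r̃[n])_i := r(nN₀ + i), (w̃[n])_i := w(nN₀ + i), i ∈ {0,…,N₀−1}, and the N₀ × N₀ matrices H[0], H[1] by (H[0])_{u,v} := g(u, u − v) if 0 ≤ u − v < L and 0 otherwise, and (H[1])_{u,v} := g(u, N₀ + u − v) if 1 − N₀ ≤ u − v < L − N₀ and 0 otherwise. Then for every n ∈ ℤ, r̃[n] = H[0]·x̃[n] + H[1]·x̃[n−1] + w̃[n]. -/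

import Mathlib

open Matrix

set_option autoImplicit false

/-- Applying the decimated components decomposition with block length
`N₀` (a multiple of the channel period `N_ch`, with `N₀ ≥ L ≥ L_isi`) to the LPTV
channel `r(m) = Σ_{l<L_isi} g(m,l) x(m−l) + w(m)` yields the two-tap multivariate
LTI representation `r̃[n] = H[0] x̃[n] + H[1] x̃[n−1] + w̃[n]`. -/
theorem lptv_channel_dcd_two_tap_mimo
    (x w r : ℤ → ℝ) (Lisi Nch L N0 : ℕ)
    (hLisi : 0 < Lisi) (hNch : 0 < Nch) (hLpos : 0 < L) (hN0 : 0 < N0)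
    (hLge : Lisi ≤ L) (hN0L : L ≤ N0) (hdvd : Nch ∣ N0)
    (g : ℤ → ℤ → ℝ)
    (hper : ∀ m l : ℤ, g (m + (Nch : ℤ)) l = g m l)
    (hzero : ∀ m l : ℤ, (l < 0 ∨ (Lisi : ℤ) ≤ l) → g m l = 0)
    (hch : ∀ m : ℤ, r m = (∑ l ∈ Finset.range Lisi, g m ((l : ℤ)) * x (m - (l : ℤ))) + w m)
    (H0 H1 : Matrix (Fin N0) (Fin N0) ℝ)
    (hH0 : ∀ u v : Fin N0, H0 u v =
      if ((v : ℕ) : ℤ) ≤ ((u : ℕ) : ℤ) ∧ ((u : ℕ) : ℤ) - ((v : ℕ) : ℤ) < (L : ℤ)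
      then g ((u : ℕ) : ℤ) (((u : ℕ) : ℤ) - ((v : ℕ) : ℤ))
      else 0)
    (hH1 : ∀ u v : Fin N0, H1 u v =
      if 1 - (N0 : ℤ) ≤ ((u : ℕ) : ℤ) - ((v : ℕ) : ℤ) ∧
          ((u : ℕ) : ℤ) - ((v : ℕ) : ℤ) < (L : ℤ) - (N0 : ℤ)
      then g ((u : ℕ) : ℤ) ((N0 : ℤ) + ((u : ℕ) : ℤ) - ((v : ℕ) : ℤ))
      else 0) :
    ∀ (n : ℤ) (i : Fin N0),
      r (n * (N0 : ℤ) + ((i : ℕ) : ℤ)) =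
        H0.mulVec (fun v : Fin N0 => x (n * (N0 : ℤ) + ((v : ℕ) : ℤ))) i
          + H1.mulVec (fun v : Fin N0 => x ((n - 1) * (N0 : ℤ) + ((v : ℕ) : ℤ))) i
          + w (n * (N0 : ℤ) + ((i : ℕ) : ℤ)) := by
  intro n i
  haveI : NeZero N0 := ⟨hN0.ne'⟩
  -- periodicity with period any multiple of Nch
  have hperk : ∀ (t : ℤ) (a l : ℤ), g (a + t * (Nch : ℤ)) l = g a l := by
    intro t
    induction t using Int.induction_on with
    | zero => simp
    | succ k ih =>
      intro a l
      have h1 : a + ((k : ℤ) + 1) * (Nch : ℤ) = (a + (k : ℤ) * Nch) + Nch := by ring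
      rw [h1, hper, ih]
    | pred k ih =>
      intro a l
      have h1 : a + (-(k : ℤ) - 1) * (Nch : ℤ) + (Nch : ℤ) = a + (-(k : ℤ)) * Nch := by ring
      have := hper (a + (-(k : ℤ) - 1) * (Nch : ℤ)) l
      rw [h1] at this
      rw [← this, ih]
  obtain ⟨k, hk⟩ := hdvd
  set m : ℤ := n * (N0 : ℤ) + ((i : ℕ) : ℤ) with hm
  have hgm : ∀ l : ℤ, g m l = g ((i : ℕ) : ℤ) l := by
    intro l
    have hkz : (N0 : ℤ) = (Nch : ℤ) * (k : ℤ) := by exact_mod_cast hk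
    have h1 : m = ((i : ℕ) : ℤ) + (n * (k : ℤ)) * (Nch : ℤ) := by
      rw [hm, hkz]; ring
    rw [h1, hperk]
  -- key pointwise identity
  have key : ∀ l : Fin N0,
      g m ((l : ℕ) : ℤ) * x (m - ((l : ℕ) : ℤ)) =
        H0 i (i - l) * x (n * (N0 : ℤ) + (((i - l : Fin N0) : ℕ) : ℤ))
          + H1 i (i - l) * x ((n - 1) * (N0 : ℤ) + (((i - l : Fin N0) : ℕ) : ℤ)) := by
    intro l
    have hil : (l : ℕ) < N0 := l.isLt
    have hii : (i : ℕ) < N0 := i.isLt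
    have hvmk : ((i - l : Fin N0) : ℕ) = (N0 - (l : ℕ) + (i : ℕ)) % N0 := by
      rw [Fin.sub_def]
    rw [hH0, hH1]
    by_cases hle : (l : ℕ) ≤ (i : ℕ)
    · have hv : ((i - l : Fin N0) : ℕ) = (i : ℕ) - (l : ℕ) := by
        rw [hvmk]
        have h1 : N0 - (l : ℕ) + (i : ℕ) = N0 + ((i : ℕ) - (l : ℕ)) := by omega
        rw [h1, Nat.add_mod_left, Nat.mod_eq_of_lt (by omega)]
      have hvz : ((((i - l : Fin N0) : ℕ)) : ℤ) = ((i : ℕ) : ℤ) - ((l : ℕ) : ℤ) := by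
        rw [hv]; omega
      rw [hvz]
      by_cases hL : ((l : ℕ) : ℤ) < (L : ℤ)
      · rw [if_pos ⟨by omega, by omega⟩, if_neg (by omega)]
        have h2 : ((i : ℕ) : ℤ) - (((i : ℕ) : ℤ) - ((l : ℕ) : ℤ)) = ((l : ℕ) : ℤ) := by ring
        have h3 : n * (N0 : ℤ) + (((i : ℕ) : ℤ) - ((l : ℕ) : ℤ)) = m - ((l : ℕ) : ℤ) := by
          rw [hm]; ring
        rw [h2, h3, hgm]
        ring
      · rw [if_neg (by omega), if_neg (by omega)]
        have h4 : g m ((l : ℕ) : ℤ) = 0 := hzero _ _ (Or.inr (by omega))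
        rw [h4]; ring
    · have hv : ((i - l : Fin N0) : ℕ) = N0 + (i : ℕ) - (l : ℕ) := by
        rw [hvmk]
        have h1 : N0 - (l : ℕ) + (i : ℕ) = N0 + (i : ℕ) - (l : ℕ) := by omega
        rw [h1, Nat.mod_eq_of_lt (by omega)]
      have hvz : ((((i - l : Fin N0) : ℕ)) : ℤ) = (N0 : ℤ) + ((i : ℕ) : ℤ) - ((l : ℕ) : ℤ) := by
        rw [hv]; omega
      rw [hvz]
      by_cases hL : ((l : ℕ) : ℤ) < (L : ℤ)
      · rw [if_neg (by omega), if_pos ⟨by omega, by omega⟩]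
        have h2 : (N0 : ℤ) + ((i : ℕ) : ℤ) - (((N0 : ℤ) + ((i : ℕ) : ℤ) - ((l : ℕ) : ℤ)))
            = ((l : ℕ) : ℤ) := by ring
        have h3 : (n - 1) * (N0 : ℤ) + ((N0 : ℤ) + ((i : ℕ) : ℤ) - ((l : ℕ) : ℤ))
            = m - ((l : ℕ) : ℤ) := by rw [hm]; ring
        rw [h2, h3, hgm]
        ring
      · rw [if_neg (by omega), if_neg (by omega)]
        have h4 : g m ((l : ℕ) : ℤ) = 0 := hzero _ _ (Or.inr (by omega))
        rw [h4]; ring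
  rw [hch]
  congr 1
  -- extend the sum to range N0
  have hsub : (∑ l ∈ Finset.range Lisi, g m ((l : ℤ)) * x (m - (l : ℤ)))
      = ∑ l ∈ Finset.range N0, g m ((l : ℤ)) * x (m - (l : ℤ)) := by
    refine Finset.sum_subset (Finset.range_subset_range.mpr (hLge.trans hN0L)) ?_
    intro l _ hl
    rw [Finset.mem_range, not_lt] at hl
    rw [hzero _ _ (Or.inr (by omega))]
    ring
  rw [hsub, ← Fin.sum_univ_eq_sum_range (fun l => g m ((l : ℤ)) * x (m - (l : ℤ))) N0]
  rw [Matrix.mulVec, Matrix.mulVec]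
  simp only [dotProduct]
  rw [← Finset.sum_add_distrib]
  exact Fintype.sum_equiv (Equiv.subLeft i) _ _ (fun l => by
    simpa using key l)
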